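/- Let L be a Lagrangian of order r in m field components over an open set U ⊆ ℝⁿ. Then for every smooth field q : U → ℝᵐ and every smooth variation δq : U → ℝᵐ, the first variation satisfies, as smooth functions on U: Σ_{k=0}^{r} (∂L/∂q^i_{,μ₁…μₖ})[q] · ∂_{μ₁}⋯∂_{μₖ} δq^i = Σ_{k=0}^{r} ∂_{μ₁}⋯∂_{μₖ}( (δL/δq^i_{,μ₁…μₖ})[q] · δq^i ), with summation over repeated indices i and μ. -/

import Mathlib

open scoped BigOperators

noncomputable section

/-- Partial derivative of a function on `ℝⁿ` in the coordinate direction `μ`. -/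
def pd {n : ℕ} (μ : Fin n) (f : (Fin n → ℝ) → ℝ) : (Fin n → ℝ) → ℝ :=
  fun x => fderiv ℝ f x (Pi.single μ 1)

/-- Iterated partial derivatives `∂_{μ₁}⋯∂_{μₖ}` along a list of coordinate directions. -/
def pds {n : ℕ} : List (Fin n) → ((Fin n → ℝ) → ℝ) → (Fin n → ℝ) → ℝ
  | [], f => f
  | μ :: l, f => pd μ (pds l f)

/-- Index of a jet variable `q^i_{,μ₁…μₖ}` (`k ≤ r`). -/
abbrev JetIdx (n m r : ℕ) := Fin m × Σ k : Fin (r + 1), (Fin (k : ℕ) → Fin n)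

abbrev JetFiber (n m r : ℕ) := JetIdx n m r → ℝ

/-- The order-`r` jet space: base coordinates together with all jet variables. -/
abbrev JetSpace (n m r : ℕ) := (Fin n → ℝ) × JetFiber n m r

/-- The `r`-jet prolongation of a field `q`. -/
def jetOf {n m : ℕ} (r : ℕ) (q : (Fin n → ℝ) → Fin m → ℝ) (x : Fin n → ℝ) :
    JetSpace n m r :=
  (x, fun p => pds (List.ofFn p.2.2) (fun y => q y p.1) x)

/-- The symmetrized delta `δ^{(μ₁}_{ν₁}⋯δ^{μₖ)}_{νₖ}` (zero if arities differ). -/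
def symCoeff {n k k' : ℕ} (μ : Fin k → Fin n) (ν : Fin k' → Fin n) : ℝ :=
  ((Finset.univ.filter fun σ : Equiv.Perm (Fin k) =>
      List.ofFn (μ ∘ σ) = List.ofFn ν).card : ℝ) / (Nat.factorial k : ℝ)

def jetDir {n : ℕ} (m r : ℕ) (i : Fin m) {k : ℕ} (μ : Fin k → Fin n) : JetFiber n m r :=
  fun p => if p.1 = i then symCoeff μ p.2.2 else 0

/-- The symmetrized partial derivative `∂L/∂q^i_{,μ₁…μₖ}` of a jet function,
obeying `∂q^i_{,ν₁…νₖ}/∂q^j_{,μ₁…μ_l} = δ^l_k δ^i_j δ^{(μ₁}_{ν₁}⋯δ^{μₖ)}_{νₖ}`. -/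
def pdQ {n m r : ℕ} (L : JetSpace n m r → ℝ) (i : Fin m) {k : ℕ} (μ : Fin k → Fin n) :
    JetSpace n m r → ℝ :=
  fun z => fderiv ℝ L z ((0 : Fin n → ℝ), jetDir m r i μ)

/-- The partial derivative `∂L/∂x^μ` of a jet function w.r.t. a base coordinate. -/
def pdX {n m r : ℕ} (L : JetSpace n m r → ℝ) (μ : Fin n) : JetSpace n m r → ℝ :=
  fun z => fderiv ℝ L z ((Pi.single μ 1 : Fin n → ℝ), 0)

def idxCast {n m a b : ℕ} (h : a ≤ b) (p : JetIdx n m a) : JetIdx n m b :=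
  ⟨p.1, ⟨⟨(p.2.1 : ℕ), Nat.lt_of_lt_of_le p.2.1.isLt (Nat.succ_le_succ h)⟩, p.2.2⟩⟩

/-- Truncation of a higher-order jet to a lower order. -/
def trunc {n m a b : ℕ} (h : a ≤ b) (z : JetSpace n m b) : JetSpace n m a :=
  (z.1, fun p => z.2 (idxCast h p))

/-- Regard an order-`a` jet function as an order-`b` jet function (`a ≤ b`). -/
def liftJ {n m a b : ℕ} (h : a ≤ b) (F : JetSpace n m a → ℝ) : JetSpace n m b → ℝ :=
  fun z => F (trunc h z)

def idxExt {n m a : ℕ} (p : JetIdx n m a) (μ : Fin n) : JetIdx n m (a + 1) :=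
  ⟨p.1, ⟨⟨(p.2.1 : ℕ) + 1, Nat.succ_lt_succ p.2.1.isLt⟩, Fin.snoc p.2.2 μ⟩⟩

/-- The total derivative `d_μ` of a jet function. -/
def dTot {n m a : ℕ} (μ : Fin n) (F : JetSpace n m a → ℝ) : JetSpace n m (a + 1) → ℝ :=
  fun z => pdX F μ (trunc (Nat.le_succ a) z)
    + ∑ p : JetIdx n m a, pdQ F p.1 p.2.2 (trunc (Nat.le_succ a) z) * z.2 (idxExt p μ)

/-- Iterated total derivatives `d_{ν₁}⋯d_{νₖ}` of a jet function. -/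
def dTots {n m : ℕ} : (a k : ℕ) → (Fin k → Fin n) → (JetSpace n m a → ℝ) →
    JetSpace n m (a + k) → ℝ
  | _, 0, _, F => F
  | a, k + 1, ν, F => dTot (ν 0) (dTots a k (fun j => ν j.succ) F)

/-- The Euler–Lagrange expressions `δL/δq^i` of an order-`r` Lagrangian,
as a jet function of order `2r`. -/
def ELjet {n m r : ℕ} (L : JetSpace n m r → ℝ) (i : Fin m) : JetSpace n m (r + r) → ℝ :=
  fun z => ∑ k : Fin (r + 1), (-1 : ℝ) ^ (k : ℕ) *
    ∑ μ : Fin (k : ℕ) → Fin n,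
      liftJ (by have := k.isLt; omega) (dTots r (k : ℕ) μ (pdQ L i μ)) z

/-- The Euler–Lagrange expressions `δL/δq^i` evaluated along a field `q`
(using `(d_μ F)[q] = ∂_μ (F[q])`). -/
def ELfield {n m : ℕ} (r : ℕ) (L : JetSpace n m r → ℝ) (q : (Fin n → ℝ) → Fin m → ℝ)
    (i : Fin m) : (Fin n → ℝ) → ℝ :=
  fun x => ∑ k ∈ Finset.range (r + 1), (-1 : ℝ) ^ k *
    ∑ μ : Fin k → Fin n, pds (List.ofFn μ) (fun y => pdQ L i μ (jetOf r q y)) x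

/-- Scaling of the jet variables: `f[tq]` is `f ∘ scaleJet t`. -/
def scaleJet {n m r : ℕ} (t : ℝ) (z : JetSpace n m r) : JetSpace n m r := (z.1, t • z.2)

/-- The Lagrangian momenta `P_i^{μ₁…μ_a}` of an order-`r` Lagrangian as jet functions. -/
def Pjet {n m r : ℕ} (L : JetSpace n m r → ℝ) (i : Fin m) {a : ℕ} (κ : Fin a → Fin n) :
    JetSpace n m (r + r) → ℝ :=
  fun z => ∑ l : Fin (r - a + 1), (-1 : ℝ) ^ (l : ℕ) *
    ∑ ν : Fin (l : ℕ) → Fin n,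
      liftJ (by have := l.isLt; omega) (dTots r (l : ℕ) ν (pdQ L i (Fin.append κ ν))) z

/-- The Lagrangian momenta `P_i^{μ₁…μ_a}` evaluated along a field `q`. -/
def PmomF {n m : ℕ} (r : ℕ) (L : JetSpace n m r → ℝ) (q : (Fin n → ℝ) → Fin m → ℝ)
    (i : Fin m) {a : ℕ} (κ : Fin a → Fin n) : (Fin n → ℝ) → ℝ :=
  fun y => ∑ l ∈ Finset.range (r - a + 1), (-1 : ℝ) ^ l *
    ∑ ν : Fin l → Fin n,
      pds (List.ofFn ν) (fun w => pdQ L i (Fin.append κ ν) (jetOf r q w)) y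

/-- The Helmholtz expressions `H_{ij}^{μ₁…μₖ}(ε)` of an order-`s` system,
as jet functions of order `2s`. -/
def Hjet {n m s : ℕ} (ε : Fin m → JetSpace n m s → ℝ) (i j : Fin m) {k : ℕ}
    (μ : Fin k → Fin n) : JetSpace n m (s + s) → ℝ :=
  fun z => liftJ (Nat.le_add_right s s) (pdQ (ε i) j μ) z
    - (-1 : ℝ) ^ k *
      ∑ l : Fin (s - k + 1), ((k + (l : ℕ)).choose k : ℝ) * (-1 : ℝ) ^ (l : ℕ) *
        ∑ ν : Fin (l : ℕ) → Fin n,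
          liftJ (by have := l.isLt; omega) (dTots s (l : ℕ) ν (pdQ (ε j) i (Fin.append μ ν))) z

/-- The Vainberg–Tonti Lagrangian `Λ(ε)[q] = ∫₀¹ ε_i[tq] q^i dt`. -/
def VTjet {n m s : ℕ} (ε : Fin m → JetSpace n m s → ℝ) : JetSpace n m s → ℝ :=
  fun z => ∫ t in (0:ℝ)..1, ∑ i : Fin m,
    ε i (scaleJet t z) * z.2 ⟨i, ⟨⟨0, Nat.succ_pos s⟩, Fin.elim0⟩⟩



namespace FV

variable {n : ℕ} {U : Set (Fin n → ℝ)}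

theorem pd_congr (hU : IsOpen U) {f g : (Fin n → ℝ) → ℝ} (h : Set.EqOn f g U)
    {x : Fin n → ℝ} (hx : x ∈ U) (μ : Fin n) : pd μ f x = pd μ g x := by
  unfold pd
  rw [Filter.EventuallyEq.fderiv_eq (h.eventuallyEq_of_mem (hU.mem_nhds hx))]

theorem pds_congr (hU : IsOpen U) {f g : (Fin n → ℝ) → ℝ} (h : Set.EqOn f g U)
    (s : List (Fin n)) : Set.EqOn (pds s f) (pds s g) U := by
  induction s with
  | nil => exact h
  | cons μ s ih => exact fun x hx => pd_congr hU ih hx μ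

theorem pd_smooth (hU : IsOpen U) {f : (Fin n → ℝ) → ℝ} (hf : ContDiffOn ℝ (⊤ : ℕ∞) f U)
    (μ : Fin n) : ContDiffOn ℝ (⊤ : ℕ∞) (pd μ f) U :=
  (hf.fderiv_of_isOpen hU (by norm_cast)).clm_apply contDiffOn_const

theorem pds_smooth (hU : IsOpen U) {f : (Fin n → ℝ) → ℝ} (hf : ContDiffOn ℝ (⊤ : ℕ∞) f U)
    (s : List (Fin n)) : ContDiffOn ℝ (⊤ : ℕ∞) (pds s f) U := by
  induction s with
  | nil => exact hf
  | cons μ s ih => exact pd_smooth hU ih μ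

theorem diffAt (hU : IsOpen U) {f : (Fin n → ℝ) → ℝ} (hf : ContDiffOn ℝ (⊤ : ℕ∞) f U)
    {x : Fin n → ℝ} (hx : x ∈ U) : DifferentiableAt ℝ f x :=
  (hf.contDiffAt (hU.mem_nhds hx)).differentiableAt (by simp)

theorem pd_sum (hU : IsOpen U) {ι : Type*} (s : Finset ι) (F : ι → (Fin n → ℝ) → ℝ)
    (hF : ∀ i ∈ s, ContDiffOn ℝ (⊤ : ℕ∞) (F i) U) {x : Fin n → ℝ} (hx : x ∈ U) (μ : Fin n) :
    pd μ (fun y => ∑ i ∈ s, F i y) x = ∑ i ∈ s, pd μ (F i) x := by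
  unfold pd
  rw [fderiv_fun_sum fun i hi => diffAt hU (hF i hi) hx]
  simp

theorem pd_const_mul (hU : IsOpen U) {f : (Fin n → ℝ) → ℝ} (hf : ContDiffOn ℝ (⊤ : ℕ∞) f U)
    (c : ℝ) {x : Fin n → ℝ} (hx : x ∈ U) (μ : Fin n) :
    pd μ (fun y => c * f y) x = c * pd μ f x := by
  unfold pd
  rw [fderiv_const_mul (diffAt hU hf hx) c]
  simp

theorem pd_mul (hU : IsOpen U) {f g : (Fin n → ℝ) → ℝ} (hf : ContDiffOn ℝ (⊤ : ℕ∞) f U)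
    (hg : ContDiffOn ℝ (⊤ : ℕ∞) g U) {x : Fin n → ℝ} (hx : x ∈ U) (μ : Fin n) :
    pd μ (fun y => f y * g y) x = pd μ f x * g x + f x * pd μ g x := by
  unfold pd
  rw [fderiv_fun_mul (diffAt hU hf hx) (diffAt hU hg hx)]
  simp
  ring


variable {n : ℕ} {U : Set (Fin n → ℝ)}

theorem pds_append (s t : List (Fin n)) (f : (Fin n → ℝ) → ℝ) :
    pds (s ++ t) f = pds s (pds t f) := by
  induction s with
  | nil => rfl
  | cons μ s ih => simp [pds, ih]

theorem sum_append {a b : ℕ} (F : (Fin (a + b) → Fin n) → ℝ) :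
    (∑ ν : Fin a → Fin n, ∑ ν' : Fin b → Fin n, F (Fin.append ν ν'))
      = ∑ τ : Fin (a + b) → Fin n, F τ := by
  rw [show (∑ τ : Fin (a + b) → Fin n, F τ)
      = ∑ p : (Fin a → Fin n) × (Fin b → Fin n), F (Fin.append p.1 p.2) from
    (Fintype.sum_equiv (Fin.appendEquiv a b) _ _ fun p => rfl).symm,
    Fintype.sum_prod_type]

theorem sum_cons {k : ℕ} (F : (Fin (k + 1) → Fin n) → ℝ) :
    (∑ μ : Fin (k + 1) → Fin n, F μ)
      = ∑ c : Fin n, ∑ μ : Fin k → Fin n, F (Fin.cons c μ) := by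
  rw [show (∑ μ : Fin (k + 1) → Fin n, F μ)
      = ∑ p : Fin n × (Fin k → Fin n), F (Fin.cons p.1 p.2) from
    (Fintype.sum_equiv (Fin.consEquiv fun _ => Fin n) _ _ fun p => rfl).symm,
    Fintype.sum_prod_type]

theorem exists_comp_perm {k : ℕ} {μ μ' : Fin k → Fin n}
    (h : (List.ofFn μ).Perm (List.ofFn μ')) : ∃ σ : Equiv.Perm (Fin k), μ' = μ ∘ σ := by
  have hs : μ ∘ Tuple.sort μ = μ' ∘ Tuple.sort μ' := by
    apply List.ofFn_injective
    exact List.Perm.eq_of_sortedLE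
      (Tuple.monotone_sort μ).sortedLE_ofFn (Tuple.monotone_sort μ').sortedLE_ofFn
      (((Tuple.sort μ).ofFn_comp_perm μ).trans
        (h.trans ((Tuple.sort μ').ofFn_comp_perm μ').symm))
  refine ⟨Tuple.sort μ * (Tuple.sort μ')⁻¹, ?_⟩
  funext i
  have := congrFun hs ((Tuple.sort μ')⁻¹ i)
  simpa using this.symm



theorem tri (N : ℕ) (f : ℕ → ℕ → ℝ) :
    (∑ a ∈ Finset.range (N + 1), ∑ b ∈ Finset.range (N - a + 1), f a b)
      = ∑ k ∈ Finset.range (N + 1), ∑ a ∈ Finset.range (k + 1), f a (k - a) := by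
  rw [Finset.sum_sigma', Finset.sum_sigma']
  refine Finset.sum_nbij' (fun p => ⟨p.1 + p.2, p.1⟩) (fun p => ⟨p.2, p.1 - p.2⟩)
    ?_ ?_ ?_ ?_ ?_
  · rintro ⟨u, v⟩ huv
    dsimp only at huv ⊢
    simp only [Finset.mem_sigma, Finset.mem_range] at huv ⊢
    omega
  · rintro ⟨u, v⟩ huv
    dsimp only at huv ⊢
    simp only [Finset.mem_sigma, Finset.mem_range] at huv ⊢
    omega
  · rintro ⟨u, v⟩ huv
    show (⟨u, u + v - u⟩ : (_ : ℕ) × ℕ) = ⟨u, v⟩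
    have e : u + v - u = v := by omega
    rw [e]
  · rintro ⟨u, v⟩ huv
    simp only [Finset.mem_sigma, Finset.mem_range] at huv
    show (⟨v + (u - v), v⟩ : (_ : ℕ) × ℕ) = ⟨u, v⟩
    have e : v + (u - v) = u := by omega
    rw [e]
  · rintro ⟨u, v⟩ huv
    show f u v = f u (u + v - u)
    congr 1
    omega

theorem alt_coeff (k L : ℕ) :
    (∑ l ∈ Finset.range (L + 1),
      (-1 : ℝ) ^ (L - l) * ((k + l).choose k : ℝ) * ((k + L).choose (k + l) : ℝ))
      = if L = 0 then 1 else 0 := by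
  have key : ∀ l ∈ Finset.range (L + 1),
      (-1 : ℝ) ^ (L - l) * ((k + l).choose k : ℝ) * ((k + L).choose (k + l) : ℝ)
        = ((k + L).choose k : ℝ) * ((-1 : ℝ) ^ (L - l) * (L.choose l : ℝ)) := by
    intro l hl
    simp only [Finset.mem_range] at hl
    have h1 : (k + L).choose (k + l) * (k + l).choose k
        = (k + L).choose k * ((k + L - k).choose (k + l - k)) :=
      Nat.choose_mul (by omega)
    have h2 : (k + L).choose (k + l) * (k + l).choose k = (k + L).choose k * L.choose l := by
      rw [h1]; congr 1 <;> congr 1 <;> omega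
    have h3 := congrArg (fun t : ℕ => (t : ℝ)) h2
    push_cast at h3
    linear_combination ((-1 : ℝ) ^ (L - l)) * h3
  rw [Finset.sum_congr rfl key, ← Finset.mul_sum]
  have h4 : (∑ l ∈ Finset.range (L + 1), (-1 : ℝ) ^ (L - l) * (L.choose l : ℝ))
      = if L = 0 then 1 else 0 := by
    rw [← Finset.sum_range_reflect]
    have h5 : ∀ l ∈ Finset.range (L + 1),
        (-1 : ℝ) ^ (L - (L + 1 - 1 - l)) * (L.choose (L + 1 - 1 - l) : ℝ)
          = (-1 : ℝ) ^ l * (L.choose l : ℝ) := by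
      intro l hl
      simp only [Finset.mem_range] at hl
      have e1 : L + 1 - 1 - l = L - l := by omega
      rw [e1, Nat.choose_symm (by omega), Nat.sub_sub_self (by omega)]
    rw [Finset.sum_congr rfl h5]
    have h6 := congrArg (fun t : ℤ => (t : ℝ)) (Int.alternating_sum_range_choose (n := L))
    push_cast at h6
    exact_mod_cast h6
  rw [h4]
  by_cases h : L = 0
  · subst h; simp
  · simp [h]


theorem pds_sum (hU : IsOpen U) {ι : Type*} (s : Finset ι) (F : ι → (Fin n → ℝ) → ℝ)
    (hF : ∀ i ∈ s, ContDiffOn ℝ (⊤ : ℕ∞) (F i) U) (t : List (Fin n)) :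
    ∀ x ∈ U, pds t (fun y => ∑ i ∈ s, F i y) x = ∑ i ∈ s, pds t (F i) x := by
  induction t with
  | nil => intro x hx; rfl
  | cons μ t ih =>
    intro x hx
    show pd μ (pds t fun y => ∑ i ∈ s, F i y) x = _
    rw [pd_congr hU (fun y hy => ih y hy) hx μ,
      pd_sum hU s _ (fun i hi => pds_smooth hU (hF i hi) t) hx μ]
    rfl

theorem pds_const_mul (hU : IsOpen U) {f : (Fin n → ℝ) → ℝ} (hf : ContDiffOn ℝ (⊤ : ℕ∞) f U)
    (c : ℝ) (t : List (Fin n)) :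
    ∀ x ∈ U, pds t (fun y => c * f y) x = c * pds t f x := by
  induction t with
  | nil => intro x hx; rfl
  | cons μ t ih =>
    intro x hx
    show pd μ (pds t fun y => c * f y) x = _
    rw [pd_congr hU (fun y hy => ih y hy) hx μ,
      pd_const_mul hU (pds_smooth hU hf t) c hx μ]
    rfl

theorem symCoeff_comp_perm {k k' : ℕ} (μ : Fin k → Fin n) (σ : Equiv.Perm (Fin k))
    (ν : Fin k' → Fin n) : symCoeff (μ ∘ σ) ν = symCoeff μ ν := by
  unfold symCoeff
  congr 2
  apply Finset.card_nbij' (fun τ => σ * τ) (fun τ => σ⁻¹ * τ)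
  · intro τ hτ
    simp only [Finset.mem_coe, Finset.mem_filter, Finset.mem_univ, true_and] at hτ ⊢
    rw [show μ ∘ ⇑(σ * τ) = (μ ∘ σ) ∘ τ from rfl]
    exact hτ
  · intro τ hτ
    simp only [Finset.mem_coe, Finset.mem_filter, Finset.mem_univ, true_and] at hτ ⊢
    rw [show (μ ∘ σ) ∘ ⇑(σ⁻¹ * τ) = μ ∘ (σ * (σ⁻¹ * τ)) from rfl, ← mul_assoc,
      mul_inv_cancel, one_mul]
    exact hτ
  · intro τ hτ; simp [← mul_assoc]
  · intro τ hτ; simp [← mul_assoc]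

theorem pdQ_listPerm {m r k k' : ℕ} (L : JetSpace n m r → ℝ) (i : Fin m)
    (μ : Fin k → Fin n) (μ' : Fin k' → Fin n) (h : (List.ofFn μ).Perm (List.ofFn μ')) :
    pdQ L i μ = pdQ L i μ' := by
  have hk : k = k' := by simpa using h.length_eq
  subst hk
  obtain ⟨σ, rfl⟩ := exists_comp_perm h
  funext z
  unfold pdQ
  congr 1
  unfold jetDir
  congr 1
  funext p
  rw [symCoeff_comp_perm]

theorem jet_smooth {m : ℕ} (hU : IsOpen U) (r : ℕ) (q : (Fin n → ℝ) → Fin m → ℝ)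
    (hq : ContDiffOn ℝ (⊤ : ℕ∞) q U) : ContDiffOn ℝ (⊤ : ℕ∞) (jetOf r q) U := by
  apply ContDiffOn.prodMk
  · exact contDiffOn_id
  · exact contDiffOn_pi.2 fun p => pds_smooth hU ((contDiffOn_pi.1 hq) p.1) (List.ofFn p.2.2)

theorem pdQ_comp_smooth {m r k : ℕ} (hU : IsOpen U) (L : JetSpace n m r → ℝ)
    (hL : ContDiffOn ℝ (⊤ : ℕ∞) L {z | z.1 ∈ U}) (i : Fin m) (κ : Fin k → Fin n)
    (q : (Fin n → ℝ) → Fin m → ℝ) (hq : ContDiffOn ℝ (⊤ : ℕ∞) q U) :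
    ContDiffOn ℝ (⊤ : ℕ∞) (fun y => pdQ L i κ (jetOf r q y)) U := by
  have hV : IsOpen {z : JetSpace n m r | z.1 ∈ U} := hU.preimage continuous_fst
  have hpdQ : ContDiffOn ℝ (⊤ : ℕ∞) (pdQ L i κ) {z : JetSpace n m r | z.1 ∈ U} :=
    (hL.fderiv_of_isOpen hV (by norm_cast)).clm_apply contDiffOn_const
  exact hpdQ.comp (jet_smooth hU r q hq) (fun x hx => hx)

theorem ofFn_cons {k : ℕ} (c : Fin n) (μ : Fin k → Fin n) :
    List.ofFn (Fin.cons c μ) = c :: List.ofFn μ := by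
  rw [List.ofFn_succ]
  simp

theorem pascal_step (k : ℕ) (S : ℕ → ℕ → ℝ) :
    (∑ l ∈ Finset.range (k + 1),
        (k.choose l : ℝ) * (S (l + 1) (k - l) + S l (k - l + 1)))
      = ∑ l ∈ Finset.range (k + 2), ((k + 1).choose l : ℝ) * S l (k + 1 - l) := by
  have e1 : ∀ l ∈ Finset.range (k + 1),
      (k.choose l : ℝ) * (S (l + 1) (k - l) + S l (k - l + 1))
        = (k.choose l : ℝ) * S (l + 1) (k + 1 - (l + 1))
          + (k.choose l : ℝ) * S l (k + 1 - l) := by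
    intro l hl
    simp only [Finset.mem_range] at hl
    have h1 : k - l = k + 1 - (l + 1) := by omega
    have h2 : k - l + 1 = k + 1 - l := by omega
    rw [← h1, ← h2, mul_add]
  rw [Finset.sum_congr rfl e1, Finset.sum_add_distrib]
  have e2 : (∑ l ∈ Finset.range (k + 1), (k.choose l : ℝ) * S l (k + 1 - l))
      = ∑ l ∈ Finset.range (k + 2), (k.choose l : ℝ) * S l (k + 1 - l) := by
    symm
    rw [Finset.sum_range_succ]
    simp [Nat.choose_succ_self]
  rw [e2, Finset.sum_range_succ' (fun l => (k.choose l : ℝ) * S l (k + 1 - l)) (k + 1),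
    Finset.sum_range_succ' (fun l => ((k + 1).choose l : ℝ) * S l (k + 1 - l)) (k + 1)]
  have e3 : ∀ l, ((k + 1).choose (l + 1) : ℝ) = (k.choose l : ℝ) + (k.choose (l + 1) : ℝ) := by
    intro l
    rw [Nat.choose_succ_succ]
    push_cast
    ring
  simp only [e3, Nat.choose_zero_right]
  have e4 : ∀ x ∈ Finset.range (k + 1),
      ((k.choose x : ℝ) + (k.choose (x + 1) : ℝ)) * S (x + 1) (k + 1 - (x + 1))
        = (k.choose x : ℝ) * S (x + 1) (k + 1 - (x + 1))
          + (k.choose (x + 1) : ℝ) * S (x + 1) (k + 1 - (x + 1)) :=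
    fun x _ => add_mul _ _ _
  rw [Finset.sum_congr rfl e4, Finset.sum_add_distrib]
  ring

theorem pd_triple (hU : IsOpen U) {ι₁ ι₂ : ℕ → Type} [∀ l, Fintype (ι₁ l)]
    [∀ l, Fintype (ι₂ l)]
    (c : Fin n) (C : ℕ → ℝ) (s : Finset ℕ)
    (F : (l : ℕ) → ι₁ l → ι₂ l → (Fin n → ℝ) → ℝ) (G : (l : ℕ) → ι₂ l → (Fin n → ℝ) → ℝ)
    (hF : ∀ l i j, ContDiffOn ℝ (⊤ : ℕ∞) (F l i j) U)
    (hG : ∀ l j, ContDiffOn ℝ (⊤ : ℕ∞) (G l j) U) {x : Fin n → ℝ} (hx : x ∈ U) :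
    pd c (fun y => ∑ l ∈ s, C l * ∑ i : ι₁ l, ∑ j : ι₂ l, F l i j y * G l j y) x
      = ∑ l ∈ s, C l * ∑ i : ι₁ l, ∑ j : ι₂ l,
          (pd c (F l i j) x * G l j x + F l i j x * pd c (G l j) x) := by
  rw [pd_sum hU s (fun l => fun y => C l * ∑ i : ι₁ l, ∑ j : ι₂ l, F l i j y * G l j y)
    (fun l _ => contDiffOn_const.mul (ContDiffOn.sum fun i _ =>
      ContDiffOn.sum fun j _ => (hF l i j).mul (hG l j))) hx c]
  refine Finset.sum_congr rfl fun l _ => ?_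
  rw [pd_const_mul hU (ContDiffOn.sum fun i (_ : i ∈ Finset.univ) =>
      ContDiffOn.sum fun j (_ : j ∈ Finset.univ) => (hF l i j).mul (hG l j)) (C l) hx c]
  congr 1
  rw [pd_sum hU Finset.univ (fun i => fun y => ∑ j : ι₂ l, F l i j y * G l j y)
    (fun i _ => ContDiffOn.sum fun j _ => (hF l i j).mul (hG l j)) hx c]
  refine Finset.sum_congr rfl fun i _ => ?_
  rw [pd_sum hU Finset.univ (fun j => fun y => F l i j y * G l j y)
    (fun j _ => (hF l i j).mul (hG l j)) hx c]
  refine Finset.sum_congr rfl fun j _ => ?_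
  rw [pd_mul hU (hF l i j) (hG l j) hx c]

theorem leib (hU : IsOpen U) (g : (Fin n → ℝ) → ℝ) (hg : ContDiffOn ℝ (⊤ : ℕ∞) g U) :
    ∀ (k : ℕ) (B : (a : ℕ) → (Fin a → Fin n) → (Fin n → ℝ) → ℝ),
      (∀ (a b : ℕ) (κ : Fin a → Fin n) (κ' : Fin b → Fin n),
          (List.ofFn κ).Perm (List.ofFn κ') → B a κ = B b κ') →
      (∀ (a : ℕ) (κ : Fin a → Fin n), ContDiffOn ℝ (⊤ : ℕ∞) (B a κ) U) →
      ∀ x ∈ U,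
      (∑ μ : Fin k → Fin n, pds (List.ofFn μ) (fun y => B k μ y * g y) x)
        = ∑ l ∈ Finset.range (k + 1), (k.choose l : ℝ) *
            ∑ ν : Fin l → Fin n, ∑ ρ : Fin (k - l) → Fin n,
              pds (List.ofFn ν) (B (k - l + l) (Fin.append ρ ν)) x
                * pds (List.ofFn ρ) g x := by
  intro k
  induction k with
  | zero =>
    intro B hB hBSm x hx
    letI : Unique (Fin 0 → Fin n) := ⟨⟨fun i => i.elim0⟩, fun f => funext fun i => i.elim0⟩
    rw [Finset.sum_range_one, Fintype.sum_unique, Fintype.sum_unique, Fintype.sum_unique]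
    have hpds0 : ∀ f : (Fin n → ℝ) → ℝ, pds (List.ofFn (default : Fin 0 → Fin n)) f = f := by
      intro f; rw [List.ofFn_zero]; rfl
    simp only [hpds0]
    rw [hB 0 (0 - 0 + 0) default (Fin.append default default)
        (by rw [List.ofFn_zero, List.ofFn_zero])]
    norm_num
  | succ k ih =>
    intro B hB hBSm x hx
    rw [sum_cons (fun μ' => pds (List.ofFn μ') (fun y => B (k + 1) μ' y * g y) x)]
    -- rewrite each c-slice as a pd of the IH right-hand side
    have step2 : ∀ c : Fin n,
        (∑ μ : Fin k → Fin n,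
          pds (List.ofFn (Fin.cons c μ)) (fun y => B (k + 1) (Fin.cons c μ) y * g y) x)
          = pd c (fun y => ∑ l ∈ Finset.range (k + 1), (k.choose l : ℝ) *
              ∑ ν : Fin l → Fin n, ∑ ρ : Fin (k - l) → Fin n,
                pds (List.ofFn ν) (B (k - l + l + 1) (Fin.cons c (Fin.append ρ ν))) y
                  * pds (List.ofFn ρ) g y) x := by
      intro c
      have t1 : ∀ μ : Fin k → Fin n,
          pds (List.ofFn (Fin.cons c μ)) (fun y => B (k + 1) (Fin.cons c μ) y * g y) x
            = pd c (pds (List.ofFn μ) (fun y => B (k + 1) (Fin.cons c μ) y * g y)) x := by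
        intro μ; rw [ofFn_cons]; rfl
      rw [Finset.sum_congr rfl fun μ _ => t1 μ]
      rw [← pd_sum hU Finset.univ
        (fun μ => pds (List.ofFn μ) (fun y => B (k + 1) (Fin.cons c μ) y * g y))
        (fun μ _ => pds_smooth hU ((hBSm _ _).mul hg) _) hx c]
      exact pd_congr hU
        (fun y hy => ih (fun a κ => B (a + 1) (Fin.cons c κ))
          (fun a b κ κ' hp => hB (a + 1) (b + 1) (Fin.cons c κ) (Fin.cons c κ')
            (by rw [ofFn_cons, ofFn_cons]; exact hp.cons c))
          (fun a κ => hBSm _ _) y hy) hx c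
    rw [Finset.sum_congr rfl fun c _ => step2 c]
    -- differentiate the IH right-hand side
    have step3 : ∀ c : Fin n,
        pd c (fun y => ∑ l ∈ Finset.range (k + 1), (k.choose l : ℝ) *
            ∑ ν : Fin l → Fin n, ∑ ρ : Fin (k - l) → Fin n,
              pds (List.ofFn ν) (B (k - l + l + 1) (Fin.cons c (Fin.append ρ ν))) y
                * pds (List.ofFn ρ) g y) x
          = ∑ l ∈ Finset.range (k + 1), (k.choose l : ℝ) *
              ∑ ν : Fin l → Fin n, ∑ ρ : Fin (k - l) → Fin n,
                (pds (List.ofFn (Fin.cons c ν))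
                    (B (k - l + (l + 1)) (Fin.append ρ (Fin.cons c ν))) x
                  * pds (List.ofFn ρ) g x
                + pds (List.ofFn ν)
                    (B (k - l + 1 + l) (Fin.append (Fin.cons c ρ) ν)) x
                  * pds (List.ofFn (Fin.cons c ρ)) g x) := by
      intro c
      rw [pd_triple hU (ι₁ := fun l => Fin l → Fin n) (ι₂ := fun l => Fin (k - l) → Fin n)
        c (fun l => (k.choose l : ℝ)) (Finset.range (k + 1))
        (fun l ν ρ => pds (List.ofFn ν) (B (k - l + l + 1) (Fin.cons c (Fin.append ρ ν))))
        (fun l ρ => pds (List.ofFn ρ) g)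
        (fun l ν ρ => pds_smooth hU (hBSm _ _) _)
        (fun l ρ => pds_smooth hU hg _) hx]
      refine Finset.sum_congr rfl fun l hl => ?_
      congr 1
      refine Finset.sum_congr rfl fun ν _ => ?_
      refine Finset.sum_congr rfl fun ρ _ => ?_
      have e1 : B (k - l + l + 1) (Fin.cons c (Fin.append ρ ν))
          = B (k - l + (l + 1)) (Fin.append ρ (Fin.cons c ν)) := by
        apply hB
        rw [ofFn_cons, List.ofFn_fin_append, List.ofFn_fin_append, ofFn_cons]
        exact List.perm_middle.symm
      have e2 : B (k - l + l + 1) (Fin.cons c (Fin.append ρ ν))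
          = B (k - l + 1 + l) (Fin.append (Fin.cons c ρ) ν) := by
        apply hB
        rw [ofFn_cons, List.ofFn_fin_append, List.ofFn_fin_append, ofFn_cons]
        exact List.Perm.refl _
      congr 1
      · rw [← e1, ofFn_cons]
        rfl
      · rw [← e2, ofFn_cons (c := c) (μ := ρ)]
        rfl
    rw [Finset.sum_congr rfl fun c _ => step3 c]
    -- regroup the sums
    rw [Finset.sum_comm]
    refine Eq.trans ?_ (pascal_step k (fun a b =>
      ∑ ν : Fin a → Fin n, ∑ ρ : Fin b → Fin n,
        pds (List.ofFn ν) (B (b + a) (Fin.append ρ ν)) x * pds (List.ofFn ρ) g x))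
    refine Finset.sum_congr rfl fun l hl => ?_
    rw [← Finset.mul_sum]
    congr 1
    simp only [Finset.sum_add_distrib]
    congr 1
    · rw [sum_cons (fun ν' => ∑ ρ : Fin (k - l) → Fin n,
        pds (List.ofFn ν') (B (k - l + (l + 1)) (Fin.append ρ ν')) x
          * pds (List.ofFn ρ) g x)]
    · rw [Finset.sum_comm]
      refine Finset.sum_congr rfl fun ν _ => ?_
      rw [sum_cons (fun ρ' => pds (List.ofFn ν) (B (k - l + 1 + l) (Fin.append ρ' ν)) x
        * pds (List.ofFn ρ') g x)]

/-- The higher Euler operator family built from `A`. -/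
def Efam (A : (a : ℕ) → (Fin a → Fin n) → (Fin n → ℝ) → ℝ) (r : ℕ)
    (a : ℕ) (κ : Fin a → Fin n) : (Fin n → ℝ) → ℝ :=
  fun y => ∑ j ∈ Finset.range (r - a + 1), ((a + j).choose a : ℝ) * (-1 : ℝ) ^ j *
    ∑ ν' : Fin j → Fin n, pds (List.ofFn ν') (A (a + j) (Fin.append κ ν')) y

theorem Efam_smooth (hU : IsOpen U) {A : (a : ℕ) → (Fin a → Fin n) → (Fin n → ℝ) → ℝ}
    (hASm : ∀ (a : ℕ) (κ : Fin a → Fin n), ContDiffOn ℝ (⊤ : ℕ∞) (A a κ) U)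
    (r a : ℕ) (κ : Fin a → Fin n) : ContDiffOn ℝ (⊤ : ℕ∞) (Efam A r a κ) U :=
  ContDiffOn.sum fun j _ => contDiffOn_const.mul
    (ContDiffOn.sum fun ν' _ => pds_smooth hU (hASm _ _) _)

theorem Efam_perm {A : (a : ℕ) → (Fin a → Fin n) → (Fin n → ℝ) → ℝ}
    (hA : ∀ (a b : ℕ) (κ : Fin a → Fin n) (κ' : Fin b → Fin n),
      (List.ofFn κ).Perm (List.ofFn κ') → A a κ = A b κ')
    (r : ℕ) (a b : ℕ) (κ : Fin a → Fin n) (κ' : Fin b → Fin n)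
    (h : (List.ofFn κ).Perm (List.ofFn κ')) : Efam A r a κ = Efam A r b κ' := by
  have hab : a = b := by simpa using h.length_eq
  subst hab
  unfold Efam
  funext y
  refine Finset.sum_congr rfl fun j _ => ?_
  congr 1
  refine Finset.sum_congr rfl fun ν' _ => ?_
  rw [hA (a + j) (a + j) (Fin.append κ ν') (Fin.append κ' ν')
    (by rw [List.ofFn_fin_append, List.ofFn_fin_append]; exact h.append_right _)]

theorem inversion (hU : IsOpen U) (A : (a : ℕ) → (Fin a → Fin n) → (Fin n → ℝ) → ℝ)
    (hA : ∀ (a b : ℕ) (κ : Fin a → Fin n) (κ' : Fin b → Fin n),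
      (List.ofFn κ).Perm (List.ofFn κ') → A a κ = A b κ')
    (hASm : ∀ (a : ℕ) (κ : Fin a → Fin n), ContDiffOn ℝ (⊤ : ℕ∞) (A a κ) U)
    (r k : ℕ) (hk : k ≤ r) (μ : Fin k → Fin n) {x : Fin n → ℝ} (hx : x ∈ U) :
    (∑ l ∈ Finset.range (r - k + 1), ((k + l).choose k : ℝ) *
        ∑ ν : Fin l → Fin n, pds (List.ofFn ν) (Efam A r (k + l) (Fin.append μ ν)) x)
      = A k μ x := by
  -- expand each pds of Efam
  have step1 : ∀ (l : ℕ) (ν : Fin l → Fin n),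
      pds (List.ofFn ν) (Efam A r (k + l) (Fin.append μ ν)) x
        = ∑ j ∈ Finset.range (r - (k + l) + 1), ((k + l + j).choose (k + l) : ℝ) * (-1 : ℝ) ^ j *
            ∑ ν' : Fin j → Fin n,
              pds (List.ofFn ν ++ List.ofFn ν')
                (A (k + l + j) (Fin.append (Fin.append μ ν) ν')) x := by
    intro l ν
    rw [show Efam A r (k + l) (Fin.append μ ν)
        = fun y => ∑ j ∈ Finset.range (r - (k + l) + 1),
            ((k + l + j).choose (k + l) : ℝ) * (-1 : ℝ) ^ j *
              ∑ ν' : Fin j → Fin n,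
                pds (List.ofFn ν') (A (k + l + j) (Fin.append (Fin.append μ ν) ν')) y from rfl]
    rw [pds_sum hU (Finset.range (r - (k + l) + 1))
      (fun j => fun y => ((k + l + j).choose (k + l) : ℝ) * (-1 : ℝ) ^ j *
        ∑ ν' : Fin j → Fin n,
          pds (List.ofFn ν') (A (k + l + j) (Fin.append (Fin.append μ ν) ν')) y)
      (fun j _ => contDiffOn_const.mul
        (ContDiffOn.sum fun ν' _ => pds_smooth hU (hASm _ _) _)) (List.ofFn ν) x hx]
    refine Finset.sum_congr rfl fun j _ => ?_
    rw [show (fun y => ((k + l + j).choose (k + l) : ℝ) * (-1 : ℝ) ^ j *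
        ∑ ν' : Fin j → Fin n,
          pds (List.ofFn ν') (A (k + l + j) (Fin.append (Fin.append μ ν) ν')) y)
      = fun y => (((k + l + j).choose (k + l) : ℝ) * (-1 : ℝ) ^ j) *
        ((fun z => ∑ ν' : Fin j → Fin n,
          pds (List.ofFn ν') (A (k + l + j) (Fin.append (Fin.append μ ν) ν')) z) y) from rfl]
    rw [pds_const_mul hU (ContDiffOn.sum fun ν' _ => pds_smooth hU (hASm _ _) _) _ _ x hx]
    congr 1
    rw [pds_sum hU Finset.univ
      (fun ν' => pds (List.ofFn ν') (A (k + l + j) (Fin.append (Fin.append μ ν) ν')))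
      (fun ν' _ => pds_smooth hU (hASm _ _) _) (List.ofFn ν) x hx]
    exact Finset.sum_congr rfl fun ν' _ => (congrFun (pds_append _ _ _) x).symm
  rw [Finset.sum_congr rfl fun l _ =>
    congrArg (((k + l).choose k : ℝ) * ·) (Finset.sum_congr rfl fun ν _ => step1 l ν)]
  -- merge the two tuple sums
  have step2 : ∀ l ∈ Finset.range (r - k + 1),
      (((k + l).choose k : ℝ) *
        ∑ ν : Fin l → Fin n,
          ∑ j ∈ Finset.range (r - (k + l) + 1), ((k + l + j).choose (k + l) : ℝ) * (-1 : ℝ) ^ j *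
            ∑ ν' : Fin j → Fin n,
              pds (List.ofFn ν ++ List.ofFn ν')
                (A (k + l + j) (Fin.append (Fin.append μ ν) ν')) x)
        = ∑ j ∈ Finset.range (r - k - l + 1),
            ((k + l).choose k : ℝ) * ((k + l + j).choose (k + l) : ℝ) * (-1 : ℝ) ^ j *
              ∑ τ : Fin (l + j) → Fin n,
                pds (List.ofFn τ) (A (k + (l + j)) (Fin.append μ τ)) x := by
    intro l _
    have erange : r - (k + l) = r - k - l := by omega
    rw [erange, Finset.sum_comm, Finset.mul_sum]
    refine Finset.sum_congr rfl fun j _ => ?_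
    rw [← Finset.mul_sum, ← mul_assoc]
    congr 1
    · ring
    have eterm : ∀ ν : Fin l → Fin n, ∀ ν' : Fin j → Fin n,
        pds (List.ofFn ν ++ List.ofFn ν')
            (A (k + l + j) (Fin.append (Fin.append μ ν) ν')) x
          = pds (List.ofFn (Fin.append ν ν'))
              (A (k + (l + j)) (Fin.append μ (Fin.append ν ν'))) x := by
      intro ν ν'
      rw [List.ofFn_fin_append,
        hA (k + l + j) (k + (l + j)) (Fin.append (Fin.append μ ν) ν')
          (Fin.append μ (Fin.append ν ν'))
          (by rw [List.ofFn_fin_append, List.ofFn_fin_append, List.ofFn_fin_append,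
                List.ofFn_fin_append, List.append_assoc])]
    rw [Finset.sum_congr rfl fun ν _ => Finset.sum_congr rfl fun ν' _ => eterm ν ν']
    exact sum_append fun τ => pds (List.ofFn τ) (A (k + (l + j)) (Fin.append μ τ)) x
  rw [Finset.sum_congr rfl step2]
  rw [tri (r - k) (fun a b => ((k + a).choose k : ℝ) * ((k + a + b).choose (k + a) : ℝ)
    * (-1 : ℝ) ^ b * ∑ τ : Fin (a + b) → Fin n,
        pds (List.ofFn τ) (A (k + (a + b)) (Fin.append μ τ)) x)]
  -- collapse the binomial coefficients
  have step3 : ∀ K ∈ Finset.range (r - k + 1),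
      (∑ l ∈ Finset.range (K + 1),
        ((k + l).choose k : ℝ) * ((k + l + (K - l)).choose (k + l) : ℝ) * (-1 : ℝ) ^ (K - l) *
          ∑ τ : Fin (l + (K - l)) → Fin n,
            pds (List.ofFn τ) (A (k + (l + (K - l))) (Fin.append μ τ)) x)
        = (if K = 0 then (1 : ℝ) else 0) *
            ∑ τ : Fin K → Fin n, pds (List.ofFn τ) (A (k + K) (Fin.append μ τ)) x := by
    intro K _
    have e1 : ∀ l ∈ Finset.range (K + 1),
        ((k + l).choose k : ℝ) * ((k + l + (K - l)).choose (k + l) : ℝ) * (-1 : ℝ) ^ (K - l) *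
          (∑ τ : Fin (l + (K - l)) → Fin n,
            pds (List.ofFn τ) (A (k + (l + (K - l))) (Fin.append μ τ)) x)
          = ((-1 : ℝ) ^ (K - l) * ((k + l).choose k : ℝ) * ((k + K).choose (k + l) : ℝ)) *
              ∑ τ : Fin K → Fin n, pds (List.ofFn τ) (A (k + K) (Fin.append μ τ)) x := by
      intro l hl
      simp only [Finset.mem_range] at hl
      have e2 : l + (K - l) = K := by omega
      have e3 : k + l + (K - l) = k + K := by omega
      rw [e2, e3]
      ring
    rw [Finset.sum_congr rfl e1, ← Finset.sum_mul, alt_coeff]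
  rw [Finset.sum_congr rfl step3]
  have e4 : ∀ K ∈ Finset.range (r - k + 1),
      ((if K = 0 then (1 : ℝ) else 0) *
          ∑ τ : Fin K → Fin n, pds (List.ofFn τ) (A (k + K) (Fin.append μ τ)) x)
        = if K = 0 then
            (∑ τ : Fin K → Fin n, pds (List.ofFn τ) (A (k + K) (Fin.append μ τ)) x) else 0 :=
    fun K _ => by split <;> simp
  rw [Finset.sum_congr rfl e4, Finset.sum_ite_eq' (Finset.range (r - k + 1)) 0
    (fun K => ∑ τ : Fin K → Fin n, pds (List.ofFn τ) (A (k + K) (Fin.append μ τ)) x)]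
  simp only [Finset.mem_range, Nat.lt_add_one_iff, Nat.zero_le, if_true]
  -- the remaining term is A k μ x
  letI : Unique (Fin 0 → Fin n) := ⟨⟨fun i => i.elim0⟩, fun f => funext fun i => i.elim0⟩
  rw [Fintype.sum_unique]
  have hpds0 : ∀ f : (Fin n → ℝ) → ℝ, pds (List.ofFn (default : Fin 0 → Fin n)) f = f := by
    intro f; rw [List.ofFn_zero]; rfl
  rw [hpds0, hA (k + 0) k (Fin.append μ default) μ
    (by rw [List.ofFn_fin_append, List.ofFn_zero, List.append_nil])]


def SSfun (A : (a : ℕ) → (Fin a → Fin n) → (Fin n → ℝ) → ℝ) (r : ℕ)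
    (g : (Fin n → ℝ) → ℝ) (x : Fin n → ℝ) (j l : ℕ) : ℝ :=
  ∑ ν : Fin l → Fin n, ∑ ρ : Fin j → Fin n,
    pds (List.ofFn ν) (Efam A r (j + l) (Fin.append ρ ν)) x * pds (List.ofFn ρ) g x

theorem key (hU : IsOpen U) (r : ℕ) (A : (a : ℕ) → (Fin a → Fin n) → (Fin n → ℝ) → ℝ)
    (hA : ∀ (a b : ℕ) (κ : Fin a → Fin n) (κ' : Fin b → Fin n),
      (List.ofFn κ).Perm (List.ofFn κ') → A a κ = A b κ')
    (hASm : ∀ (a : ℕ) (κ : Fin a → Fin n), ContDiffOn ℝ (⊤ : ℕ∞) (A a κ) U)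
    (g : (Fin n → ℝ) → ℝ) (hg : ContDiffOn ℝ (⊤ : ℕ∞) g U)
    {x : Fin n → ℝ} (hx : x ∈ U) :
    (∑ k ∈ Finset.range (r + 1), ∑ μ : Fin k → Fin n, A k μ x * pds (List.ofFn μ) g x)
      = ∑ k ∈ Finset.range (r + 1), ∑ μ : Fin k → Fin n,
          pds (List.ofFn μ) (fun y => Efam A r k μ y * g y) x := by
  calc
    (∑ k ∈ Finset.range (r + 1), ∑ μ : Fin k → Fin n, A k μ x * pds (List.ofFn μ) g x)
      = ∑ k ∈ Finset.range (r + 1), ∑ l ∈ Finset.range (r - k + 1),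
          ((k + l).choose k : ℝ) * SSfun A r g x k l := by
        refine Finset.sum_congr rfl fun k hk => ?_
        simp only [Finset.mem_range, Nat.lt_add_one_iff] at hk
        have h1 : ∀ μ : Fin k → Fin n,
            A k μ x * pds (List.ofFn μ) g x
              = ∑ l ∈ Finset.range (r - k + 1),
                  (((k + l).choose k : ℝ) *
                    ∑ ν : Fin l → Fin n,
                      pds (List.ofFn ν) (Efam A r (k + l) (Fin.append μ ν)) x)
                    * pds (List.ofFn μ) g x := by
          intro μ
          rw [← inversion hU A hA hASm r k hk μ hx, Finset.sum_mul]
        rw [Finset.sum_congr rfl fun μ _ => h1 μ, Finset.sum_comm]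
        refine Finset.sum_congr rfl fun l _ => ?_
        have h3 : ∀ μ : Fin k → Fin n,
            (((k + l).choose k : ℝ) *
              ∑ ν : Fin l → Fin n,
                pds (List.ofFn ν) (Efam A r (k + l) (Fin.append μ ν)) x)
              * pds (List.ofFn μ) g x
            = ((k + l).choose k : ℝ) *
                ∑ ν : Fin l → Fin n,
                  pds (List.ofFn ν) (Efam A r (k + l) (Fin.append μ ν)) x
                    * pds (List.ofFn μ) g x := by
          intro μ
          rw [mul_assoc, Finset.sum_mul]
        rw [Finset.sum_congr rfl fun μ _ => h3 μ, ← Finset.mul_sum]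
        congr 1
        rw [Finset.sum_comm]
        rfl
    _ = ∑ k ∈ Finset.range (r + 1), ∑ l ∈ Finset.range (k + 1),
          (k.choose l : ℝ) * SSfun A r g x (k - l) l := by
        rw [tri r (fun a b => ((a + b).choose a : ℝ) * SSfun A r g x a b)]
        refine Finset.sum_congr rfl fun K hK => ?_
        simp only [Finset.mem_range, Nat.lt_add_one_iff] at hK
        rw [← Finset.sum_range_reflect]
        refine Finset.sum_congr rfl fun l hl => ?_
        simp only [Finset.mem_range, Nat.lt_add_one_iff] at hl
        have e1 : K + 1 - 1 - l = K - l := by omega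
        rw [e1]
        have e2 : K - (K - l) = l := by omega
        rw [e2]
        have e3 : K - l + l = K := by omega
        rw [e3, Nat.choose_symm hl]
    _ = ∑ k ∈ Finset.range (r + 1), ∑ μ : Fin k → Fin n,
          pds (List.ofFn μ) (fun y => Efam A r k μ y * g y) x := by
        refine Finset.sum_congr rfl fun k _ => ?_
        exact (leib hU g hg k (Efam A r) (Efam_perm hA r)
          (Efam_smooth hU hASm r) x hx).symm

end FV

/-- **First variation via the higher Euler operators** (eq. (C.5)).
For a Lagrangian `L` of order `r` in `m` field components over an open set `U ⊆ ℝⁿ`,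
for every smooth field `q` and smooth variation `δq`, as smooth functions on `U`:
`Σ_{k=0}^{r} (∂L/∂q^i_{,μ₁…μₖ})[q] ∂_{μ₁}⋯∂_{μₖ} δq^i
  = Σ_{k=0}^{r} ∂_{μ₁}⋯∂_{μₖ}( (δL/δq^i_{,μ₁…μₖ})[q] δq^i )`,
where `δL/δq^i_{,μ₁…μₖ} = Σ_{l=0}^{r−k} binom(k+l,k) (−1)^l d_{ν₁}⋯d_{ν_l}
∂L/∂q^i_{,μ₁…μₖν₁…ν_l}` (total derivatives evaluated along `q` as `x`-derivatives). -/
theorem first_variation_higher_euler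
    (n m r : ℕ) (U : Set (Fin n → ℝ)) (hU : IsOpen U)
    (L : JetSpace n m r → ℝ) (hL : ContDiffOn ℝ (⊤ : ℕ∞) L {z | z.1 ∈ U})
    (q δq : (Fin n → ℝ) → Fin m → ℝ)
    (hq : ContDiffOn ℝ (⊤ : ℕ∞) q U) (hδq : ContDiffOn ℝ (⊤ : ℕ∞) δq U) :
    ∀ x ∈ U,
      ∑ k ∈ Finset.range (r + 1), ∑ μ : Fin k → Fin n, ∑ i : Fin m,
        pdQ L i μ (jetOf r q x) * pds (List.ofFn μ) (fun y => δq y i) x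
      = ∑ k ∈ Finset.range (r + 1), ∑ μ : Fin k → Fin n,
          pds (List.ofFn μ)
            (fun y => ∑ i : Fin m,
              (∑ l ∈ Finset.range (r - k + 1),
                ((k + l).choose k : ℝ) * (-1 : ℝ) ^ l *
                  ∑ ν : Fin l → Fin n,
                    pds (List.ofFn ν)
                      (fun w => pdQ L i (Fin.append μ ν) (jetOf r q w)) y) *
                δq y i) x := by
  intro x hx
  have hgi : ∀ i : Fin m, ContDiffOn ℝ (⊤ : ℕ∞) (fun y => δq y i) U :=
    fun i => contDiffOn_pi.1 hδq i
  have hAi : ∀ i : Fin m, ∀ (a b : ℕ) (κ : Fin a → Fin n) (κ' : Fin b → Fin n),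
      (List.ofFn κ).Perm (List.ofFn κ') →
      (fun w => pdQ L i κ (jetOf r q w)) = (fun w => pdQ L i κ' (jetOf r q w)) :=
    fun i a b κ κ' hp => by rw [FV.pdQ_listPerm L i κ κ' hp]
  have hASmi : ∀ (i : Fin m) (a : ℕ) (κ : Fin a → Fin n),
      ContDiffOn ℝ (⊤ : ℕ∞) (fun w => pdQ L i κ (jetOf r q w)) U :=
    fun i a κ => FV.pdQ_comp_smooth hU L hL i κ q hq
  have hkey : ∀ i : Fin m,
      (∑ k ∈ Finset.range (r + 1), ∑ μ : Fin k → Fin n,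
        pdQ L i μ (jetOf r q x) * pds (List.ofFn μ) (fun y => δq y i) x)
      = ∑ k ∈ Finset.range (r + 1), ∑ μ : Fin k → Fin n,
          pds (List.ofFn μ)
            (fun y => FV.Efam (fun _ κ => fun w => pdQ L i κ (jetOf r q w)) r k μ y
              * δq y i) x := by
    intro i
    exact FV.key hU r (fun _ κ => fun w => pdQ L i κ (jetOf r q w))
      (hAi i) (hASmi i) (fun y => δq y i) (hgi i) hx
  calc
    (∑ k ∈ Finset.range (r + 1), ∑ μ : Fin k → Fin n, ∑ i : Fin m,
        pdQ L i μ (jetOf r q x) * pds (List.ofFn μ) (fun y => δq y i) x)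
      = ∑ i : Fin m, ∑ k ∈ Finset.range (r + 1), ∑ μ : Fin k → Fin n,
          pdQ L i μ (jetOf r q x) * pds (List.ofFn μ) (fun y => δq y i) x :=
      (Finset.sum_congr rfl fun k _ => Finset.sum_comm).trans Finset.sum_comm
    _ = ∑ i : Fin m, ∑ k ∈ Finset.range (r + 1), ∑ μ : Fin k → Fin n,
          pds (List.ofFn μ)
            (fun y => FV.Efam (fun _ κ => fun w => pdQ L i κ (jetOf r q w)) r k μ y
              * δq y i) x :=
      Finset.sum_congr rfl fun i _ => hkey i
    _ = ∑ k ∈ Finset.range (r + 1), ∑ μ : Fin k → Fin n, ∑ i : Fin m,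
          pds (List.ofFn μ)
            (fun y => FV.Efam (fun _ κ => fun w => pdQ L i κ (jetOf r q w)) r k μ y
              * δq y i) x :=
      Finset.sum_comm.trans (Finset.sum_congr rfl fun k _ => Finset.sum_comm)
    _ = ∑ k ∈ Finset.range (r + 1), ∑ μ : Fin k → Fin n,
          pds (List.ofFn μ)
            (fun y => ∑ i : Fin m,
              (∑ l ∈ Finset.range (r - k + 1),
                ((k + l).choose k : ℝ) * (-1 : ℝ) ^ l *
                  ∑ ν : Fin l → Fin n,
                    pds (List.ofFn ν)
                      (fun w => pdQ L i (Fin.append μ ν) (jetOf r q w)) y) *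
                δq y i) x := by
      refine Finset.sum_congr rfl fun k _ => Finset.sum_congr rfl fun μ _ => ?_
      exact (FV.pds_sum hU Finset.univ
        (fun i => fun y => FV.Efam (fun _ κ => fun w => pdQ L i κ (jetOf r q w)) r k μ y
          * δq y i)
        (fun i _ => (FV.Efam_smooth hU (fun a κ => hASmi i a κ) r k μ).mul (hgi i))
        (List.ofFn μ) x hx).symm

end
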